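/- Suppose in addition that f(x₁) ≤ d̄ < ∞ for all x₁. Then there exist a positive integer N and a radius R > 0, depending only on d, d̄ and β, such that for every t ∈ ℝ and every k ∈ {1, …, 2N−1} the set E_k := {(x₁,x₂) : t − 1 + (k−1)/(2N) ≤ x₁ ≤ t − 1 + (k+1)/(2N), f₁(x₁) < x₂ < f₂(x₁)} contains the closed ball B̄_k of radius R centered at (t_k, (f₁(t_k)+f₂(t_k))/2), where t_k := t − 1 + k/(2N), and E_k is star-shaped with respect to every point of B̄_k. -/

import Mathlib

open Set

/-- Lipschitz estimate from a bound on the derivative. -/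
lemma stmt19_lip {β : ℝ} (hβ : 0 ≤ β) {f : ℝ → ℝ} (hf : ContDiff ℝ (⊤ : ℕ∞) f)
    (h : ∀ x, |deriv f x| ≤ β) : ∀ u v : ℝ, |f u - f v| ≤ β * |u - v| := by
  have hdiff : Differentiable ℝ f := hf.differentiable (by simp)
  have hl : LipschitzWith β.toNNReal f :=
    lipschitzWith_of_nnnorm_deriv_le hdiff (fun x => by
      rw [← NNReal.coe_le_coe]
      simpa [Real.coe_toNNReal β hβ, Real.norm_eq_abs] using h x)
  intro u v
  have := hl.dist_le_mul u v
  simpa [Real.dist_eq, Real.coe_toNNReal β hβ] using this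

/-- One-sided star-convexity arithmetic. -/
lemma stmt19_aux (d β a b L F Fy Fx Zy Zx : ℝ) (hd : 0 < d) (hβ : 0 ≤ β)
    (ha : 0 < a) (hb : 0 ≤ b) (hab : a + b = 1) (hL : 0 ≤ L)
    (hβL : 2 * β * L ≤ d / 8)
    (h3 : Fy - β * (b * L) ≤ F) (h4 : Fx - β * (a * L) ≤ F)
    (h1 : d / 4 ≤ Fy - Zy) (h2 : 0 ≤ Fx - Zx) :
    a * Zy + b * Zx < F := by
  have k3 := mul_le_mul_of_nonneg_left h3 ha.le
  have k4 := mul_le_mul_of_nonneg_left h4 hb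
  have hid : a * F + b * F = F := by rw [← add_mul, hab, one_mul]
  nlinarith [mul_le_mul_of_nonneg_left h1 ha.le, mul_nonneg hb h2,
    mul_nonneg (mul_nonneg (mul_nonneg ha.le hβ) hL) (by linarith : (0:ℝ) ≤ 1 - b),
    mul_le_mul_of_nonneg_left hβL ha.le, mul_pos ha hd]

set_option maxHeartbeats 1600000 in
theorem stmt_19 (d dbar β : ℝ)
    (hd : 0 < d) (hddbar : d ≤ dbar) (hβ : 0 ≤ β) :
    ∃ (N : ℕ) (R : ℝ), 0 < N ∧ 0 < R ∧
      ∀ (f₁ f₂ : ℝ → ℝ),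
        ContDiff ℝ (⊤ : ℕ∞) f₁ → ContDiff ℝ (⊤ : ℕ∞) f₂ →
        (∀ x₁ : ℝ, d ≤ f₂ x₁ - f₁ x₁) → (∀ x₁ : ℝ, f₂ x₁ - f₁ x₁ ≤ dbar) →
        (∀ x₁ : ℝ, |deriv f₁ x₁| ≤ β) → (∀ x₁ : ℝ, |deriv f₂ x₁| ≤ β) →
        ∀ t : ℝ, ∀ k : ℕ, 1 ≤ k → k ≤ 2 * N - 1 →
          Metric.closedBall
              ((t - 1 + (k : ℝ) / (2 * N),
                (f₁ (t - 1 + (k : ℝ) / (2 * N)) + f₂ (t - 1 + (k : ℝ) / (2 * N))) / 2) :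
                ℝ × ℝ) R ⊆
            {x : ℝ × ℝ | t - 1 + ((k : ℝ) - 1) / (2 * N) ≤ x.1 ∧
              x.1 ≤ t - 1 + ((k : ℝ) + 1) / (2 * N) ∧ f₁ x.1 < x.2 ∧ x.2 < f₂ x.1} ∧
          ∀ y ∈ Metric.closedBall
              ((t - 1 + (k : ℝ) / (2 * N),
                (f₁ (t - 1 + (k : ℝ) / (2 * N)) + f₂ (t - 1 + (k : ℝ) / (2 * N))) / 2) :
                ℝ × ℝ) R,
            StarConvex ℝ y
              {x : ℝ × ℝ | t - 1 + ((k : ℝ) - 1) / (2 * N) ≤ x.1 ∧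
                x.1 ≤ t - 1 + ((k : ℝ) + 1) / (2 * N) ∧ f₁ x.1 < x.2 ∧ x.2 < f₂ x.1} := by
  have hNpos : 0 < Nat.ceil (16 * (β + 1) / d) := Nat.ceil_pos.mpr (by positivity)
  set N : ℕ := Nat.ceil (16 * (β + 1) / d) with hNdef
  have hn : (0:ℝ) < (N:ℝ) := by exact_mod_cast hNpos
  have hnd : 16 * (β + 1) ≤ (N:ℝ) * d := by
    have h := Nat.le_ceil (16 * (β + 1) / d)
    rw [div_le_iff₀ hd] at h
    exact_mod_cast h
  refine ⟨N, 1 / (4 * (N:ℝ)), hNpos, by positivity, ?_⟩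
  intro f₁ f₂ hf₁ hf₂ hlow hhigh hd₁ hd₂ t k hk1 hk2
  set n : ℝ := (N:ℝ) with hndef
  set R : ℝ := 1 / (4 * n) with hRdef
  have hR : 0 < R := by positivity
  set tk : ℝ := t - 1 + (k:ℝ) / (2 * n) with htk
  set A : ℝ := t - 1 + ((k:ℝ) - 1) / (2 * n) with hAdef
  set B : ℝ := t - 1 + ((k:ℝ) + 1) / (2 * n) with hBdef
  have hA : A = tk - 1 / (2 * n) := by rw [hAdef, htk]; field_simp; ring
  have hB : B = tk + 1 / (2 * n) := by rw [hBdef, htk]; field_simp; ring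
  have hhalf : R ≤ 1 / (2 * n) := by
    rw [hRdef]
    exact one_div_le_one_div_of_le (by positivity) (by linarith)
  have hRn : (1 + β) * R ≤ d / 4 := by
    rw [hRdef, mul_one_div, div_le_div_iff₀ (by positivity) (by norm_num)]
    nlinarith
  have hβn : β * (1 / n) ≤ d / 16 := by
    rw [mul_one_div, div_le_div_iff₀ hn (by norm_num)]
    nlinarith
  have lip₁ := stmt19_lip hβ hf₁ hd₁
  have lip₂ := stmt19_lip hβ hf₂ hd₂
  set c : ℝ × ℝ := (tk, (f₁ tk + f₂ tk) / 2) with hc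
  clear_value c B A tk R n N
  have hball : ∀ y ∈ Metric.closedBall c R,
      A ≤ y.1 ∧ y.1 ≤ B ∧ d / 4 ≤ f₂ y.1 - y.2 ∧ d / 4 ≤ y.2 - f₁ y.1 := by
    intro y hy
    simp only [hc, Metric.mem_closedBall, Prod.dist_eq, max_le_iff, Real.dist_eq] at hy
    obtain ⟨hy1, hy2⟩ := hy
    rw [abs_le] at hy1 hy2
    have l1 := abs_le.mp (lip₁ y.1 tk)
    have l2 := abs_le.mp (lip₂ y.1 tk)
    have hβy : β * |y.1 - tk| ≤ β * R :=
      mul_le_mul_of_nonneg_left (abs_le.mpr ⟨hy1.1, hy1.2⟩) hβ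
    have hw := hlow tk
    refine ⟨by rw [hA]; linarith [hy1.1], by rw [hB]; linarith [hy1.2],
      by linarith [l2.1, l2.2, hy2.1, hy2.2], by linarith [l1.1, l1.2, hy2.1, hy2.2]⟩
  constructor
  · intro y hy
    obtain ⟨h1, h2, h3, h4⟩ := hball y hy
    exact ⟨h1, h2, by linarith, by linarith⟩
  · intro y hy
    obtain ⟨hyA, hyB, hy2, hy1⟩ := hball y hy
    intro x hx a b ha hb hab
    obtain ⟨hxA, hxB, hx1, hx2⟩ := hx
    rcases eq_or_lt_of_le ha with h0 | ha'
    · have hb1 : b = 1 := by linarith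
      rw [← h0, hb1]
      simpa using ⟨hxA, hxB, hx1, hx2⟩
    · have hz1 : (a • y + b • x).1 = a * y.1 + b * x.1 := rfl
      have hz2 : (a • y + b • x).2 = a * y.2 + b * x.2 := rfl
      set L : ℝ := |x.1 - y.1| with hLdef
      have hL0 : 0 ≤ L := abs_nonneg _
      have hBA : B = A + 1 / n := by rw [hA, hB]; field_simp; ring
      have hL : L ≤ 1 / n := by
        rw [hLdef, abs_le]
        exact ⟨by linarith, by linarith⟩
      have hβL : 2 * β * L ≤ d / 8 := by
        linarith [mul_le_mul_of_nonneg_left hL hβ, hβn]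
      have hzy : a * y.1 + b * x.1 - y.1 = b * (x.1 - y.1) := by
        have h' : a = 1 - b := by linarith
        rw [h']; ring
      have hzx : a * y.1 + b * x.1 - x.1 = a * (y.1 - x.1) := by
        have h' : b = 1 - a := by linarith
        rw [h']; ring
      have habsy : |a * y.1 + b * x.1 - y.1| = b * L := by
        rw [hzy, abs_mul, abs_of_nonneg hb, hLdef]
      have habsx : |a * y.1 + b * x.1 - x.1| = a * L := by
        rw [hzx, abs_mul, abs_of_nonneg ha, hLdef, abs_sub_comm]
      refine ⟨?_, ?_, ?_, ?_⟩ <;> rw [hz1] <;> try rw [hz2]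
      · have hAid : a * A + b * A = A := by rw [← add_mul, hab, one_mul]
        linarith [mul_le_mul_of_nonneg_left hyA ha, mul_le_mul_of_nonneg_left hxA hb, hAid]
      · have hBid : a * B + b * B = B := by rw [← add_mul, hab, one_mul]
        linarith [mul_le_mul_of_nonneg_left hyB ha, mul_le_mul_of_nonneg_left hxB hb, hBid]
      · -- lower boundary: f₁ (z1) < z2
        have l3 := abs_le.mp (lip₁ (a * y.1 + b * x.1) y.1)
        have l4 := abs_le.mp (lip₁ (a * y.1 + b * x.1) x.1)
        rw [habsy] at l3; rw [habsx] at l4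
        have := stmt19_aux d β a b L (-(f₁ (a * y.1 + b * x.1))) (-(f₁ y.1)) (-(f₁ x.1))
          (-y.2) (-x.2) hd hβ ha' hb hab hL0 hβL (by linarith [l3.2]) (by linarith [l4.2])
          (by linarith) (by linarith)
        linarith [this]
      · have l3 := abs_le.mp (lip₂ (a * y.1 + b * x.1) y.1)
        have l4 := abs_le.mp (lip₂ (a * y.1 + b * x.1) x.1)
        rw [habsy] at l3; rw [habsx] at l4
        exact stmt19_aux d β a b L (f₂ (a * y.1 + b * x.1)) (f₂ y.1) (f₂ x.1)
          y.2 x.2 hd hβ ha' hb hab hL0 hβL (by linarith [l3.1]) (by linarith [l4.1])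
          (by linarith) (by linarith)
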